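/- Let S and S' be finite multisets of examples in ℝ^d × {0,1} and let Δ*(S,S') = Δ(S,S')/max(|S|,|S'|) be their relative edit distance. Then for every feature j and threshold t, |G(S,j,t) − G(S',j,t)| ≤ 12.5 · Δ*(S,S'). -/

import Mathlib

open Classical in
/-- The Gini index of a multiset of binary-labeled examples:
`2 p (1-p)` where `p` is the fraction of `true` labels; `0` for the empty multiset. -/
noncomputable def gini {α : Type*} (S : Multiset (α × Bool)) : ℝ :=
  if S = 0 then 0 else
    let p : ℝ := ((S.filter fun e => e.2 = true).card : ℝ) / S.card
    2 * p * (1 - p)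

open Classical in
/-- The Gini gain of the split (j, t) on the multiset S of examples in ℝ^d × {0,1}:
G(S,j,t) = g(S) − (|S₋|/|S|) g(S₋) − (|S₊|/|S|) g(S₊) where S₋ = S[x_j ≤ t] and
S₊ = S[x_j > t]; by convention G(∅,j,t) = 0. -/
noncomputable def giniGain {d : ℕ} (S : Multiset ((Fin d → ℝ) × Bool)) (j : Fin d) (t : ℝ) : ℝ :=
  if S = 0 then 0 else
    gini S
      - (((S.filter fun e : (Fin d → ℝ) × Bool => e.1 j ≤ t).card : ℝ) / S.card) * gini (S.filter fun e : (Fin d → ℝ) × Bool => e.1 j ≤ t)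
      - (((S.filter fun e : (Fin d → ℝ) × Bool => t < e.1 j).card : ℝ) / S.card) * gini (S.filter fun e : (Fin d → ℝ) × Bool => t < e.1 j)

/-- `EditPath n S S'` holds iff `S'` can be obtained from `S` by a sequence of `n`
single-element insertions and deletions. -/
def EditPath {α : Type*} : ℕ → Multiset α → Multiset α → Prop
  | 0, S, S' => S = S'
  | n + 1, S, S' => ∃ T : Multiset α, ((∃ a, T = a ::ₘ S) ∨ (∃ a, S = a ::ₘ T)) ∧ EditPath n T S'

/-- The edit distance between two multisets: the minimum number of single-element
insertions and deletions transforming one into the other. -/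
noncomputable def editDist {α : Type*} (S S' : Multiset α) : ℕ :=
  sInf {n | EditPath n S S'}

/-! ### Auxiliary real-analysis lemmas -/

noncomputable def gp (p : ℝ) : ℝ := 2 * p * (1 - p)

lemma gp_nonneg {p : ℝ} (h0 : 0 ≤ p) (h1 : p ≤ 1) : 0 ≤ gp p := by
  unfold gp; nlinarith

lemma gp_le_half {p : ℝ} (h0 : 0 ≤ p) (h1 : p ≤ 1) : gp p ≤ 1/2 := by
  unfold gp; nlinarith [sq_nonneg (2*p - 1)]

lemma gp_abs_le {p : ℝ} (h0 : 0 ≤ p) (h1 : p ≤ 1) : |gp p| ≤ 1/2 := by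
  rw [abs_le]; constructor
  · linarith [gp_nonneg h0 h1]
  · exact gp_le_half h0 h1

lemma gp_lip {p q : ℝ} (hp0 : 0 ≤ p) (hp1 : p ≤ 1) (hq0 : 0 ≤ q) (hq1 : q ≤ 1) :
    |gp p - gp q| ≤ 2 * |p - q| := by
  have h : gp p - gp q = 2 * ((p - q) * (1 - p - q)) := by unfold gp; ring
  rw [h, abs_mul, abs_mul, abs_two]
  have h1 : |1 - p - q| ≤ 1 := by rw [abs_le]; constructor <;> linarith
  have := abs_nonneg (p - q)
  nlinarith

lemma frac_mem {k a : ℝ} (hk : 0 ≤ k) (hka : k ≤ a) : 0 ≤ k / a ∧ k / a ≤ 1 := by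
  rcases eq_or_lt_of_le (le_trans hk hka) with h | h
  · have : k = 0 := le_antisymm (h ▸ hka) hk
    simp [this]
  · exact ⟨div_nonneg hk (le_of_lt h), (div_le_one h).mpr hka⟩

lemma frac_diff {k a δ : ℝ} (hk : 0 ≤ k) (hka : k ≤ a) (hδ0 : 0 ≤ δ) (hδ1 : δ ≤ 1) :
    |(k + δ) / (a + 1) - k / a| ≤ 1 / (a + 1) := by
  have ha0 : 0 ≤ a := le_trans hk hka
  rcases eq_or_lt_of_le ha0 with h | h
  · have hk0 : k = 0 := le_antisymm (h ▸ hka) hk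
    subst hk0
    rw [← h]
    simp only [zero_add, div_zero, sub_zero, zero_div]
    rw [abs_of_nonneg (by positivity)]
    simpa using hδ1
  · have key : (k + δ) / (a + 1) - k / a = (δ * a - k) / (a * (a + 1)) := by
      field_simp; ring
    rw [key, abs_div, abs_of_pos (by positivity : (0:ℝ) < a * (a+1))]
    have h1 : |δ * a - k| ≤ a := by
      rw [abs_le]; constructor <;> nlinarith
    calc |δ * a - k| / (a * (a + 1)) ≤ a / (a * (a + 1)) := by gcongr
      _ = 1 / (a + 1) := by field_simp

lemma weight_diff {a n : ℝ} (ha : 0 ≤ a) (han : a ≤ n) :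
    |(a + 1) / (n + 1) - a / n| ≤ 1 / (n + 1) := by
  rcases eq_or_lt_of_le (le_trans ha han) with h | h
  · have ha0 : a = 0 := le_antisymm (h ▸ han) ha
    subst ha0; rw [← h]; norm_num
  · have key : (a + 1) / (n + 1) - a / n = (n - a) / (n * (n + 1)) := by
      field_simp; ring
    rw [key, abs_div, abs_of_pos (by positivity : (0:ℝ) < n * (n+1)),
      abs_of_nonneg (by linarith : (0:ℝ) ≤ n - a)]
    calc (n - a) / (n * (n + 1)) ≤ n / (n * (n + 1)) := by gcongr; linarith
      _ = 1 / (n + 1) := by field_simp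

lemma weight_diff2 {a n : ℝ} (ha : 0 ≤ a) (han : a ≤ n) :
    |a / (n + 1) - a / n| ≤ 1 / (n + 1) := by
  rcases eq_or_lt_of_le (le_trans ha han) with h | h
  · have ha0 : a = 0 := le_antisymm (h ▸ han) ha
    subst ha0; rw [← h]; norm_num
  · have key : a / (n + 1) - a / n = -(a / (n * (n + 1))) := by
      field_simp; ring
    rw [key, abs_neg, abs_div, abs_of_pos (by positivity : (0:ℝ) < n * (n+1)),
      abs_of_nonneg ha]
    calc a / (n * (n + 1)) ≤ n / (n * (n + 1)) := by gcongr
      _ = 1 / (n + 1) := by field_simp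

lemma keyC {k n δ : ℝ} (hk0 : 0 ≤ k) (hkn : k ≤ n) (hδ0 : 0 ≤ δ) (hδ1 : δ ≤ 1) :
    |gp ((k + δ) / (n + 1)) - gp (k / n)| ≤ 2 / (n + 1) := by
  obtain ⟨h1, h2⟩ := frac_mem hk0 hkn
  obtain ⟨h3, h4⟩ := frac_mem (by linarith : (0:ℝ) ≤ k + δ) (by linarith : k + δ ≤ n + 1)
  calc |gp ((k + δ) / (n + 1)) - gp (k / n)| ≤ 2 * |(k + δ) / (n + 1) - k / n| :=
        gp_lip h3 h4 h1 h2
    _ ≤ 2 * (1 / (n + 1)) := by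
        have := frac_diff hk0 hkn hδ0 hδ1
        linarith
    _ = 2 / (n + 1) := by ring

lemma keyB {k a n : ℝ} (hk0 : 0 ≤ k) (hka : k ≤ a) (han : a ≤ n) :
    |(a / (n + 1)) * gp (k / a) - (a / n) * gp (k / a)| ≤ (1/2) / (n + 1) := by
  have ha0 : 0 ≤ a := le_trans hk0 hka
  have hn0 : 0 ≤ n := le_trans ha0 han
  obtain ⟨h1, h2⟩ := frac_mem hk0 hka
  have key : (a / (n + 1)) * gp (k / a) - (a / n) * gp (k / a)
      = (a / (n + 1) - a / n) * gp (k / a) := by ring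
  rw [key, abs_mul]
  have hw := weight_diff2 ha0 han
  have hg := gp_abs_le h1 h2
  have h3 : (0:ℝ) ≤ 1 / (n + 1) := by
    apply div_nonneg zero_le_one; linarith
  calc |a / (n + 1) - a / n| * |gp (k / a)| ≤ (1 / (n + 1)) * (1/2) := by
        apply mul_le_mul hw hg (abs_nonneg _) h3
    _ = (1/2) / (n + 1) := by ring

lemma keyA {k a n δ : ℝ} (hk0 : 0 ≤ k) (hka : k ≤ a) (han : a ≤ n)
    (hδ0 : 0 ≤ δ) (hδ1 : δ ≤ 1) :
    |((a + 1) / (n + 1)) * gp ((k + δ) / (a + 1)) - (a / n) * gp (k / a)| ≤ (5/2) / (n + 1) := by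
  have ha0 : 0 ≤ a := le_trans hk0 hka
  have hn0 : 0 ≤ n := le_trans ha0 han
  obtain ⟨h1, h2⟩ := frac_mem hk0 hka
  obtain ⟨h3, h4⟩ := frac_mem (by linarith : (0:ℝ) ≤ k + δ) (by linarith : k + δ ≤ a + 1)
  have key : ((a + 1) / (n + 1)) * gp ((k + δ) / (a + 1)) - (a / n) * gp (k / a)
      = ((a + 1) / (n + 1)) * (gp ((k + δ) / (a + 1)) - gp (k / a))
        + ((a + 1) / (n + 1) - a / n) * gp (k / a) := by ring
  rw [key]
  have hw1 : (0:ℝ) ≤ (a + 1) / (n + 1) := by positivity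
  have t1 : |((a + 1) / (n + 1)) * (gp ((k + δ) / (a + 1)) - gp (k / a))| ≤ 2 / (n + 1) := by
    rw [abs_mul, abs_of_nonneg hw1]
    have hg : |gp ((k + δ) / (a + 1)) - gp (k / a)| ≤ 2 * (1 / (a + 1)) :=
      le_trans (gp_lip h3 h4 h1 h2) (by
        have := frac_diff hk0 hka hδ0 hδ1
        linarith)
    calc (a + 1) / (n + 1) * |gp ((k + δ) / (a + 1)) - gp (k / a)|
        ≤ (a + 1) / (n + 1) * (2 * (1 / (a + 1))) := by
          exact mul_le_mul_of_nonneg_left hg hw1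
      _ = 2 / (n + 1) := by
          rw [div_mul_eq_mul_div]
          field_simp
  have t2 : |((a + 1) / (n + 1) - a / n) * gp (k / a)| ≤ (1/2) / (n + 1) := by
    rw [abs_mul]
    calc |(a + 1) / (n + 1) - a / n| * |gp (k / a)| ≤ (1 / (n + 1)) * (1/2) :=
          mul_le_mul (weight_diff ha0 han) (gp_abs_le h1 h2) (abs_nonneg _) (by positivity)
      _ = (1/2) / (n + 1) := by ring
  calc |_ + _| ≤ _ + _ := abs_add_le _ _
    _ ≤ 2 / (n + 1) + (1/2) / (n + 1) := add_le_add t1 t2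
    _ = (5/2) / (n + 1) := by ring

lemma combine {X1 X0 Y1 Y0 Z1 Z0 n : ℝ}
    (hX : |X1 - X0| ≤ 2 / (n + 1)) (hY : |Y1 - Y0| ≤ (5/2) / (n + 1))
    (hZ : |Z1 - Z0| ≤ (1/2) / (n + 1)) :
    |X1 - Y1 - Z1 - (X0 - Y0 - Z0)| ≤ 5 / (n + 1) := by
  have h : X1 - Y1 - Z1 - (X0 - Y0 - Z0) = (X1 - X0) - ((Y1 - Y0) + (Z1 - Z0)) := by ring
  rw [h]
  calc |(X1 - X0) - ((Y1 - Y0) + (Z1 - Z0))| ≤ |X1 - X0| + |(Y1 - Y0) + (Z1 - Z0)| :=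
        abs_sub _ _
    _ ≤ |X1 - X0| + (|Y1 - Y0| + |Z1 - Z0|) := by
        have := abs_add_le (Y1 - Y0) (Z1 - Z0)
        linarith
    _ ≤ 2 / (n + 1) + ((5/2) / (n + 1) + (1/2) / (n + 1)) := by
        have := abs_add_le (Y1 - Y0) (Z1 - Z0); linarith
    _ = 5 / (n + 1) := by ring

/-- Abstract single-insertion core inequality (inserted element goes to the "A" side,
with label contribution `δ ∈ {0,1}`). -/
lemma step_core {n a b k kA kB δ : ℝ}
    (hn : 0 ≤ n) (hδ0 : 0 ≤ δ) (hδ1 : δ ≤ 1)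
    (hk0 : 0 ≤ k) (hk : k ≤ n)
    (hA0 : 0 ≤ kA) (hA : kA ≤ a) (ha : a ≤ n)
    (hB0 : 0 ≤ kB) (hB : kB ≤ b) (hb : b ≤ n) :
    |gp ((k + δ) / (n + 1))
      - ((a + 1) / (n + 1)) * gp ((kA + δ) / (a + 1))
      - (b / (n + 1)) * gp (kB / b)
      - (gp (k / n) - (a / n) * gp (kA / a) - (b / n) * gp (kB / b))| ≤ 5 / (n + 1) :=
  combine (keyC hk0 hk hδ0 hδ1) (keyA hA0 hA ha hδ0 hδ1) (keyB hB0 hB hb)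

/-- Same, inserted element goes to the "B" side. -/
lemma step_core' {n a b k kA kB δ : ℝ}
    (hn : 0 ≤ n) (hδ0 : 0 ≤ δ) (hδ1 : δ ≤ 1)
    (hk0 : 0 ≤ k) (hk : k ≤ n)
    (hA0 : 0 ≤ kA) (hA : kA ≤ a) (ha : a ≤ n)
    (hB0 : 0 ≤ kB) (hB : kB ≤ b) (hb : b ≤ n) :
    |gp ((k + δ) / (n + 1))
      - (a / (n + 1)) * gp (kA / a)
      - ((b + 1) / (n + 1)) * gp ((kB + δ) / (b + 1))
      - (gp (k / n) - (a / n) * gp (kA / a) - (b / n) * gp (kB / b))| ≤ 5 / (n + 1) := by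
  have h := step_core (a := b) (b := a) (kA := kB) (kB := kA) hn hδ0 hδ1 hk0 hk hB0 hB hb hA0 hA ha
  have e : gp ((k + δ) / (n + 1))
      - (a / (n + 1)) * gp (kA / a)
      - ((b + 1) / (n + 1)) * gp ((kB + δ) / (b + 1))
      - (gp (k / n) - (a / n) * gp (kA / a) - (b / n) * gp (kB / b))
      = gp ((k + δ) / (n + 1))
      - ((b + 1) / (n + 1)) * gp ((kB + δ) / (b + 1))
      - (a / (n + 1)) * gp (kA / a)
      - (gp (k / n) - (b / n) * gp (kB / b) - (a / n) * gp (kA / a)) := by ring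
  rw [e]
  exact h

/-! ### Rewriting `gini` and `giniGain` without the `if` -/

open Classical in
lemma gini_eq {α : Type*} (S : Multiset (α × Bool)) :
    gini S = gp (((S.filter fun e => e.2 = true).card : ℝ) / S.card) := by
  unfold gini gp
  split
  · rename_i h
    subst h
    simp
  · rfl

open Classical in
lemma giniGain_eq {d : ℕ} (S : Multiset ((Fin d → ℝ) × Bool)) (j : Fin d) (t : ℝ) :
    giniGain S j t =
      gp (((S.filter fun e => e.2 = true).card : ℝ) / S.card)
      - (((S.filter fun e : (Fin d → ℝ) × Bool => e.1 j ≤ t).card : ℝ) / S.card)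
          * gp ((((S.filter fun e : (Fin d → ℝ) × Bool => e.1 j ≤ t).filter fun e => e.2 = true).card : ℝ)
              / (S.filter fun e : (Fin d → ℝ) × Bool => e.1 j ≤ t).card)
      - (((S.filter fun e : (Fin d → ℝ) × Bool => t < e.1 j).card : ℝ) / S.card)
          * gp ((((S.filter fun e : (Fin d → ℝ) × Bool => t < e.1 j).filter fun e => e.2 = true).card : ℝ)
              / (S.filter fun e : (Fin d → ℝ) × Bool => t < e.1 j).card) := by
  unfold giniGain
  split
  · rename_i h
    subst h
    simp [gp]
  · rw [gini_eq, gini_eq, gini_eq]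

open Classical in
lemma giniGain_abs_le_one {d : ℕ} (S : Multiset ((Fin d → ℝ) × Bool)) (j : Fin d) (t : ℝ) :
    |giniGain S j t| ≤ 1 := by
  rw [giniGain_eq]
  set A := S.filter fun e : (Fin d → ℝ) × Bool => e.1 j ≤ t with hA
  set B := S.filter fun e : (Fin d → ℝ) × Bool => t < e.1 j with hB
  have hAS : (A.card : ℝ) ≤ S.card := by
    exact_mod_cast Multiset.card_le_card (Multiset.filter_le _ _)
  have hBS : (B.card : ℝ) ≤ S.card := by
    exact_mod_cast Multiset.card_le_card (Multiset.filter_le _ _)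
  have hkS : ((S.filter fun e => e.2 = true).card : ℝ) ≤ S.card := by
    exact_mod_cast Multiset.card_le_card (Multiset.filter_le _ _)
  have hkA : ((A.filter fun e => e.2 = true).card : ℝ) ≤ A.card := by
    exact_mod_cast Multiset.card_le_card (Multiset.filter_le _ _)
  have hkB : ((B.filter fun e => e.2 = true).card : ℝ) ≤ B.card := by
    exact_mod_cast Multiset.card_le_card (Multiset.filter_le _ _)
  obtain ⟨x0, x1⟩ := frac_mem (Nat.cast_nonneg _ : (0:ℝ) ≤ _) hkS
  obtain ⟨a0, a1⟩ := frac_mem (Nat.cast_nonneg _ : (0:ℝ) ≤ _) hkA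
  obtain ⟨b0, b1⟩ := frac_mem (Nat.cast_nonneg _ : (0:ℝ) ≤ _) hkB
  obtain ⟨wa0, wa1⟩ := frac_mem (Nat.cast_nonneg _ : (0:ℝ) ≤ _) hAS
  obtain ⟨wb0, wb1⟩ := frac_mem (Nat.cast_nonneg _ : (0:ℝ) ≤ _) hBS
  have gX0 := gp_nonneg x0 x1
  have gX1 := gp_le_half x0 x1
  have gA0 := gp_nonneg a0 a1
  have gA1 := gp_le_half a0 a1
  have gB0 := gp_nonneg b0 b1
  have gB1 := gp_le_half b0 b1
  rw [abs_le]
  constructor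
  · nlinarith
  · nlinarith

set_option maxHeartbeats 2000000 in
open Classical in
lemma step_bound {d : ℕ} (e : (Fin d → ℝ) × Bool) (S : Multiset ((Fin d → ℝ) × Bool))
    (j : Fin d) (t : ℝ) :
    |giniGain (e ::ₘ S) j t - giniGain S j t| ≤ 5 / ((S.card : ℝ) + 1) := by
  rw [giniGain_eq, giniGain_eq]
  have hAS : ((S.filter fun e : (Fin d → ℝ) × Bool => e.1 j ≤ t).card) ≤ S.card :=
    Multiset.card_le_card (Multiset.filter_le _ _)
  have hBS : ((S.filter fun e : (Fin d → ℝ) × Bool => t < e.1 j).card) ≤ S.card :=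
    Multiset.card_le_card (Multiset.filter_le _ _)
  have hkS : ((S.filter fun e => e.2 = true).card) ≤ S.card :=
    Multiset.card_le_card (Multiset.filter_le _ _)
  have hkA : (((S.filter fun e : (Fin d → ℝ) × Bool => e.1 j ≤ t).filter fun e => e.2 = true).card)
      ≤ (S.filter fun e : (Fin d → ℝ) × Bool => e.1 j ≤ t).card :=
    Multiset.card_le_card (Multiset.filter_le _ _)
  have hkB : (((S.filter fun e : (Fin d → ℝ) × Bool => t < e.1 j).filter fun e => e.2 = true).card)
      ≤ (S.filter fun e : (Fin d → ℝ) × Bool => t < e.1 j).card :=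
    Multiset.card_le_card (Multiset.filter_le _ _)
  by_cases hP : e.1 j ≤ t <;> by_cases hL : e.2 = true
  · -- left side, label true
    rw [Multiset.filter_cons_of_pos (p := fun e : (Fin d → ℝ) × Bool => e.1 j ≤ t) _ hP, Multiset.filter_cons_of_neg (p := fun e : (Fin d → ℝ) × Bool => t < e.1 j) _ (not_lt.mpr hP),
      Multiset.filter_cons_of_pos (p := fun e : (Fin d → ℝ) × Bool => e.2 = true) _ hL, Multiset.filter_cons_of_pos (p := fun e : (Fin d → ℝ) × Bool => e.2 = true) _ hL]
    simp only [Multiset.card_cons]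
    push_cast
    have hh := step_core (δ := 1)
      (n := (S.card : ℝ))
      (k := ((S.filter fun e => e.2 = true).card : ℝ))
      (a := ((S.filter fun e : (Fin d → ℝ) × Bool => e.1 j ≤ t).card : ℝ))
      (kA := (((S.filter fun e : (Fin d → ℝ) × Bool => e.1 j ≤ t).filter fun e => e.2 = true).card : ℝ))
      (b := ((S.filter fun e : (Fin d → ℝ) × Bool => t < e.1 j).card : ℝ))
      (kB := (((S.filter fun e : (Fin d → ℝ) × Bool => t < e.1 j).filter fun e => e.2 = true).card : ℝ))
      (Nat.cast_nonneg _) zero_le_one le_rfl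
      (Nat.cast_nonneg _) (by exact_mod_cast hkS)
      (Nat.cast_nonneg _) (by exact_mod_cast hkA) (by exact_mod_cast hAS)
      (Nat.cast_nonneg _) (by exact_mod_cast hkB) (by exact_mod_cast hBS)
    exact hh
  · -- left side, label false
    rw [Multiset.filter_cons_of_pos (p := fun e : (Fin d → ℝ) × Bool => e.1 j ≤ t) _ hP, Multiset.filter_cons_of_neg (p := fun e : (Fin d → ℝ) × Bool => t < e.1 j) _ (not_lt.mpr hP),
      Multiset.filter_cons_of_neg (p := fun e : (Fin d → ℝ) × Bool => e.2 = true) _ hL, Multiset.filter_cons_of_neg (p := fun e : (Fin d → ℝ) × Bool => e.2 = true) _ hL]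
    simp only [Multiset.card_cons]
    push_cast
    have := step_core (δ := 0)
      (n := (S.card : ℝ))
      (k := ((S.filter fun e => e.2 = true).card : ℝ))
      (a := ((S.filter fun e : (Fin d → ℝ) × Bool => e.1 j ≤ t).card : ℝ))
      (kA := (((S.filter fun e : (Fin d → ℝ) × Bool => e.1 j ≤ t).filter fun e => e.2 = true).card : ℝ))
      (b := ((S.filter fun e : (Fin d → ℝ) × Bool => t < e.1 j).card : ℝ))
      (kB := (((S.filter fun e : (Fin d → ℝ) × Bool => t < e.1 j).filter fun e => e.2 = true).card : ℝ))
      (Nat.cast_nonneg _) le_rfl zero_le_one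
      (Nat.cast_nonneg _) (by exact_mod_cast hkS)
      (Nat.cast_nonneg _) (by exact_mod_cast hkA) (by exact_mod_cast hAS)
      (Nat.cast_nonneg _) (by exact_mod_cast hkB) (by exact_mod_cast hBS)
    simpa using this
  · -- right side, label true
    rw [Multiset.filter_cons_of_neg (p := fun e : (Fin d → ℝ) × Bool => e.1 j ≤ t) _ hP, Multiset.filter_cons_of_pos (p := fun e : (Fin d → ℝ) × Bool => t < e.1 j) _ (not_le.mp hP),
      Multiset.filter_cons_of_pos (p := fun e : (Fin d → ℝ) × Bool => e.2 = true) _ hL, Multiset.filter_cons_of_pos (p := fun e : (Fin d → ℝ) × Bool => e.2 = true) _ hL]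
    simp only [Multiset.card_cons]
    push_cast
    have hh := step_core' (δ := 1)
      (n := (S.card : ℝ))
      (k := ((S.filter fun e => e.2 = true).card : ℝ))
      (a := ((S.filter fun e : (Fin d → ℝ) × Bool => e.1 j ≤ t).card : ℝ))
      (kA := (((S.filter fun e : (Fin d → ℝ) × Bool => e.1 j ≤ t).filter fun e => e.2 = true).card : ℝ))
      (b := ((S.filter fun e : (Fin d → ℝ) × Bool => t < e.1 j).card : ℝ))
      (kB := (((S.filter fun e : (Fin d → ℝ) × Bool => t < e.1 j).filter fun e => e.2 = true).card : ℝ))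
      (Nat.cast_nonneg _) zero_le_one le_rfl
      (Nat.cast_nonneg _) (by exact_mod_cast hkS)
      (Nat.cast_nonneg _) (by exact_mod_cast hkA) (by exact_mod_cast hAS)
      (Nat.cast_nonneg _) (by exact_mod_cast hkB) (by exact_mod_cast hBS)
    exact hh
  · -- right side, label false
    rw [Multiset.filter_cons_of_neg (p := fun e : (Fin d → ℝ) × Bool => e.1 j ≤ t) _ hP, Multiset.filter_cons_of_pos (p := fun e : (Fin d → ℝ) × Bool => t < e.1 j) _ (not_le.mp hP),
      Multiset.filter_cons_of_neg (p := fun e : (Fin d → ℝ) × Bool => e.2 = true) _ hL, Multiset.filter_cons_of_neg (p := fun e : (Fin d → ℝ) × Bool => e.2 = true) _ hL]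
    simp only [Multiset.card_cons]
    push_cast
    have := step_core' (δ := 0)
      (n := (S.card : ℝ))
      (k := ((S.filter fun e => e.2 = true).card : ℝ))
      (a := ((S.filter fun e : (Fin d → ℝ) × Bool => e.1 j ≤ t).card : ℝ))
      (kA := (((S.filter fun e : (Fin d → ℝ) × Bool => e.1 j ≤ t).filter fun e => e.2 = true).card : ℝ))
      (b := ((S.filter fun e : (Fin d → ℝ) × Bool => t < e.1 j).card : ℝ))
      (kB := (((S.filter fun e : (Fin d → ℝ) × Bool => t < e.1 j).filter fun e => e.2 = true).card : ℝ))
      (Nat.cast_nonneg _) le_rfl zero_le_one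
      (Nat.cast_nonneg _) (by exact_mod_cast hkS)
      (Nat.cast_nonneg _) (by exact_mod_cast hkA) (by exact_mod_cast hAS)
      (Nat.cast_nonneg _) (by exact_mod_cast hkB) (by exact_mod_cast hBS)
    simpa using this

/-! ### Edit path lemmas -/

lemma editPath_trans {α : Type*} :
    ∀ (m : ℕ) {n : ℕ} {S T U : Multiset α}, EditPath m S T → EditPath n T U →
      EditPath (m + n) S U := by
  intro m
  induction m with
  | zero =>
    intro n S T U h1 h2
    rw [show EditPath 0 S T from h1] at *
    simpa using h2
  | succ m ih =>
    intro n S T U h1 h2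
    obtain ⟨T', hstep, hpath⟩ := h1
    rw [show m + 1 + n = m + n + 1 by omega]
    exact ⟨T', hstep, ih hpath h2⟩

lemma editPath_cons {α : Type*} (a : α) :
    ∀ (n : ℕ) {S S' : Multiset α}, EditPath n S S' → EditPath n (a ::ₘ S) (a ::ₘ S') := by
  intro n
  induction n with
  | zero => intro S S' h; exact congrArg _ h
  | succ n ih =>
    intro S S' h
    obtain ⟨T, hstep, hpath⟩ := h
    refine ⟨a ::ₘ T, ?_, ih hpath⟩
    rcases hstep with ⟨b, rfl⟩ | ⟨b, hb⟩
    · exact Or.inl ⟨b, Multiset.cons_swap _ _ _⟩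
    · exact Or.inr ⟨b, by rw [hb, Multiset.cons_swap]⟩

lemma editPath_from_zero {α : Type*} (S : Multiset α) : EditPath S.card 0 S := by
  induction S using Multiset.induction with
  | empty => rfl
  | cons a S ih =>
    rw [Multiset.card_cons]
    have h2 := editPath_cons a S.card ih
    simp only [Multiset.cons_zero] at h2 ⊢
    exact ⟨{a}, Or.inl ⟨a, by simp⟩, h2⟩

lemma editPath_to_zero {α : Type*} (S : Multiset α) : EditPath S.card S 0 := by
  induction S using Multiset.induction with
  | empty => rfl
  | cons a S ih =>
    rw [Multiset.card_cons]
    exact ⟨S, Or.inr ⟨a, rfl⟩, ih⟩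

lemma editPath_exists {α : Type*} (S S' : Multiset α) :
    EditPath (S.card + S'.card) S S' :=
  editPath_trans _ (editPath_to_zero S) (editPath_from_zero S')

lemma editPath_card {α : Type*} :
    ∀ (n : ℕ) (S S' : Multiset α), EditPath n S S' →
      S.card ≤ S'.card + n ∧ S'.card ≤ S.card + n := by
  intro n
  induction n with
  | zero => intro S S' h; rw [show EditPath 0 S S' from h]; omega
  | succ n ih =>
    intro S S' h
    obtain ⟨T, hstep, hpath⟩ := h
    have h2 := ih T S' hpath
    rcases hstep with ⟨b, rfl⟩ | ⟨b, hb⟩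
    · rw [Multiset.card_cons] at h2; omega
    · rw [hb, Multiset.card_cons]; omega

lemma editDist_path {α : Type*} (S S' : Multiset α) :
    EditPath (editDist S S') S S' :=
  Nat.sInf_mem (⟨S.card + S'.card, editPath_exists S S'⟩ : {n | EditPath n S S'}.Nonempty)

open Classical in
lemma path_bound {d : ℕ} (j : Fin d) (t : ℝ) :
    ∀ (n : ℕ) (S S' : Multiset ((Fin d → ℝ) × Bool)) (K : ℕ), EditPath n S S' →
      K + n ≤ S.card + 1 → 1 ≤ K →
      |giniGain S j t - giniGain S' j t| ≤ 5 * n / K := by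
  intro n
  induction n with
  | zero =>
    intro S S' K h _ _
    rw [show EditPath 0 S S' from h]
    simp
  | succ n ih =>
    intro S S' K h hK hK1
    obtain ⟨T, hstep, hpath⟩ := h
    have hKpos : (0:ℝ) < K := by exact_mod_cast hK1
    have step1 : |giniGain S j t - giniGain T j t| ≤ 5 / K := by
      rcases hstep with ⟨b, rfl⟩ | ⟨b, hb⟩
      · rw [abs_sub_comm]
        refine le_trans (step_bound b S j t) ?_
        apply div_le_div_of_nonneg_left (by norm_num) hKpos
        have : K ≤ S.card + 1 := by omega
        exact_mod_cast this
      · rw [hb]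
        refine le_trans (step_bound b T j t) ?_
        apply div_le_div_of_nonneg_left (by norm_num) hKpos
        have hcard : S.card = T.card + 1 := by rw [hb, Multiset.card_cons]
        have : K ≤ T.card + 1 := by omega
        exact_mod_cast this
    have step2 : |giniGain T j t - giniGain S' j t| ≤ 5 * n / K := by
      apply ih T S' K hpath ?_ hK1
      rcases hstep with ⟨b, rfl⟩ | ⟨b, hb⟩
      · rw [Multiset.card_cons]; omega
      · have : S.card = T.card + 1 := by rw [hb, Multiset.card_cons]
        omega
    have tri := abs_sub_le (giniGain S j t) (giniGain T j t) (giniGain S' j t)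
    have heq : (5:ℝ) / K + 5 * n / K = 5 * ((n:ℝ) + 1) / K := by ring
    push_cast
    linarith


/-- |G(S,j,t) − G(S',j,t)| ≤ 12.5 · Δ*(S,S'), where
Δ*(S,S') = Δ(S,S')/max(|S|,|S'|) is the relative edit distance. -/
theorem giniGain_smooth_rel_edit {d : ℕ} (S S' : Multiset ((Fin d → ℝ) × Bool))
    (j : Fin d) (t : ℝ) :
    |giniGain S j t - giniGain S' j t| ≤
      12.5 * ((editDist S S' : ℝ) / (max S.card S'.card : ℝ)) := by
  have hpath := editDist_path S S'
  set D := editDist S S' with hD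
  set M := max S.card S'.card with hM
  rw [show (max (S.card:ℝ) (S'.card:ℝ)) = (M:ℝ) by rw [hM]; push_cast; rfl]
  by_cases hM0 : M = 0
  · have hS : S = 0 := by
      rw [← Multiset.card_eq_zero]
      omega
    have hS' : S' = 0 := by
      rw [← Multiset.card_eq_zero]
      omega
    subst hS hS'
    rw [show (M:ℝ) = 0 from by exact_mod_cast hM0, div_zero, mul_zero]
    simp [giniGain]
  · have hMpos : 0 < M := Nat.pos_of_ne_zero hM0
    have hMr : (0:ℝ) < M := by exact_mod_cast hMpos
    have hD0 : (0:ℝ) ≤ D := Nat.cast_nonneg _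
    by_cases hcase : 4 * M ≤ 25 * D
    · have h1 := giniGain_abs_le_one S j t
      have h2 := giniGain_abs_le_one S' j t
      have tri : |giniGain S j t - giniGain S' j t| ≤ 2 := by
        calc |giniGain S j t - giniGain S' j t| ≤ |giniGain S j t| + |giniGain S' j t| :=
              abs_sub _ _
          _ ≤ 2 := by linarith
      refine le_trans tri ?_
      rw [mul_div_assoc'] at *
      rw [le_div_iff₀ hMr]
      have hc : (4:ℝ) * M ≤ 25 * D := by exact_mod_cast hcase
      norm_num
      nlinarith
    · push_neg at hcase
      have hcard := editPath_card D S S' hpath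
      have hMc := max_choice S.card S'.card
      rw [← hM] at hMc
      set K := M + 1 - 2 * D with hK
      have hK1 : 1 ≤ K := by omega
      have hKcond : K + D ≤ S.card + 1 := by
        rcases hMc with h | h <;> omega
      have hb := path_bound j t D S S' K hpath hKcond hK1
      refine le_trans hb ?_
      have hKr : (K:ℝ) + 2 * D = (M:ℝ) + 1 := by
        have : K + 2 * D = M + 1 := by omega
        exact_mod_cast this
      have hKpos : (0:ℝ) < K := by
        have : (0:ℕ) < K := hK1
        exact_mod_cast this
      have hDMr : 25 * (D:ℝ) < 4 * M := by exact_mod_cast hcase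
      rw [mul_div_assoc']
      rw [div_le_div_iff₀ hKpos hMr]
      have hq : (D:ℝ) * (25 * D) ≤ (D:ℝ) * (4 * M) := by
        apply mul_le_mul_of_nonneg_left (le_of_lt hDMr) hD0
      norm_num
      nlinarith
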